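/- arXiv:2012.09726 — 2 statements merged into one kernel-verified Lean document; each statement's English description precedes it below -/
import Mathlib

section
/- For real numbers c₀ and c₁ > 0 and w₀ ∈ ℝ, ∫_{-∞}^{w₀} Φ(c₀ - c₁ w) φ(w) dw = BvN(c₀/√(1+c₁²), w₀; c₁/√(1+c₁²)), where BvN(h,k;ρ) is the bivariate normal CDF with correlation ρ. -/
open MeasureTheory Real

/-- The standard normal cumulative distribution function. -/
noncomputable def stdNormalCDF (x : ℝ) : ℝ :=
  ∫ t in Set.Iic x, Real.exp (-t ^ 2 / 2) / Real.sqrt (2 * Real.pi)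

/-- The standard normal density. -/
noncomputable def stdNormalPDF (w : ℝ) : ℝ :=
  Real.exp (-w ^ 2 / 2) / Real.sqrt (2 * Real.pi)

/-- The bivariate normal CDF with correlation `ρ`. -/
noncomputable def BvN (h k ρ : ℝ) : ℝ :=
  (1 / (2 * Real.pi * Real.sqrt (1 - ρ ^ 2))) *
    ∫ y in Set.Iic k, ∫ x in Set.Iic h,
      Real.exp (-(x ^ 2 - 2 * ρ * x * y + y ^ 2) / (2 * (1 - ρ ^ 2)))

lemma integral_Iic_comp_affine (f : ℝ → ℝ) {a : ℝ} (ha : 0 < a) (b h : ℝ) :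
    ∫ x in Set.Iic h, f (a * x + b) = a⁻¹ * ∫ t in Set.Iic (a * h + b), f t := by
  have hmap : Measure.map (fun x : ℝ => a * x + b) volume
      = ENNReal.ofReal a⁻¹ • volume := by
    have h1 : (fun x : ℝ => a * x + b) = (fun x : ℝ => x + b) ∘ (fun x : ℝ => a * x) := rfl
    rw [h1, ← Measure.map_map (measurable_add_const b) (measurable_const_mul a),
      Real.map_volume_mul_left ha.ne', Measure.map_smul, map_add_right_eq_self,
      abs_of_pos (inv_pos.mpr ha)]
  have emb : MeasurableEmbedding (fun x : ℝ => a * x + b) :=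
    (affineHomeomorph a b ha.ne').measurableEmbedding
  have hpre : (fun x : ℝ => a * x + b) ⁻¹' Set.Iic (a * h + b) = Set.Iic h := by
    ext x
    simp [mul_le_mul_iff_right₀ ha]
  calc ∫ x in Set.Iic h, f (a * x + b)
      = ∫ y in Set.Iic (a * h + b), f y ∂(Measure.map (fun x => a * x + b) volume) := by
        rw [emb.setIntegral_map, hpre]
    _ = a⁻¹ * ∫ t in Set.Iic (a * h + b), f t := by
        rw [hmap, Measure.restrict_smul, integral_smul_measure, ENNReal.toReal_ofReal (by positivity)]
        simp [smul_eq_mul]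

/-- For `c₁ > 0`:
`∫_{-∞}^{w₀} Φ(c₀ - c₁ w) φ(w) dw = BvN(c₀/√(1+c₁²), w₀; c₁/√(1+c₁²))`. -/
theorem integral_stdNormalCDF_affine_eq_BvN (c₀ c₁ w₀ : ℝ) (hc₁ : 0 < c₁) :
    ∫ w in Set.Iic w₀, stdNormalCDF (c₀ - c₁ * w) * stdNormalPDF w =
      BvN (c₀ / Real.sqrt (1 + c₁ ^ 2)) w₀ (c₁ / Real.sqrt (1 + c₁ ^ 2)) := by
  set s := Real.sqrt (1 + c₁ ^ 2) with hs_def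
  have hs : 0 < s := Real.sqrt_pos.mpr (by positivity)
  have hs2 : s ^ 2 = 1 + c₁ ^ 2 := Real.sq_sqrt (by positivity)
  have hπ : 0 < Real.pi := Real.pi_pos
  have h1ρ : 1 - (c₁ / s) ^ 2 = 1 / (1 + c₁ ^ 2) := by
    rw [div_pow, hs2]; field_simp; ring
  have hsqrt1ρ : Real.sqrt (1 - (c₁ / s) ^ 2) = s⁻¹ := by
    rw [h1ρ, one_div, Real.sqrt_inv, hs_def]
  have inner : ∀ y : ℝ,
      (∫ x in Set.Iic (c₀ / s),
          Real.exp (-(x ^ 2 - 2 * (c₁ / s) * x * y + y ^ 2) / (2 * (1 - (c₁ / s) ^ 2))))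
      = s⁻¹ * (Real.exp (-y ^ 2 / 2) *
          ∫ t in Set.Iic (c₀ - c₁ * y), Real.exp (-t ^ 2 / 2)) := by
    intro y
    have hfun : ∀ x : ℝ,
        Real.exp (-(x ^ 2 - 2 * (c₁ / s) * x * y + y ^ 2) / (2 * (1 - (c₁ / s) ^ 2)))
        = Real.exp (-y ^ 2 / 2) * Real.exp (-(s * x + -(c₁ * y)) ^ 2 / 2) := by
      intro x
      rw [← Real.exp_add]
      congr 1
      rw [h1ρ]
      have hcs : c₁ / s * s = c₁ := div_mul_cancel₀ _ hs.ne'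
      field_simp
      linear_combination (s * x ^ 2 - 2 * c₁ * x * y) * hs2
    simp_rw [hfun]
    have hb : s * (c₀ / s) + -(c₁ * y) = c₀ - c₁ * y := by field_simp; ring
    rw [MeasureTheory.integral_const_mul,
      integral_Iic_comp_affine (fun t => Real.exp (-t ^ 2 / 2)) hs (-(c₁ * y)) (c₀ / s),
      hb, mul_left_comm]
  rw [BvN]
  simp_rw [inner, MeasureTheory.integral_const_mul, hsqrt1ρ]
  have hCDF : ∀ u : ℝ, stdNormalCDF u
      = (∫ t in Set.Iic u, Real.exp (-t ^ 2 / 2)) / Real.sqrt (2 * Real.pi) := by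
    intro u
    rw [stdNormalCDF, MeasureTheory.integral_div]
  have h2π : Real.sqrt (2 * Real.pi) * Real.sqrt (2 * Real.pi) = 2 * Real.pi :=
    Real.mul_self_sqrt (by positivity)
  have hL : ∀ w : ℝ,
      (∫ t in Set.Iic (c₀ - c₁ * w), Real.exp (-t ^ 2 / 2)) / Real.sqrt (2 * Real.pi) *
        (Real.exp (-w ^ 2 / 2) / Real.sqrt (2 * Real.pi))
      = (2 * Real.pi)⁻¹ *
          (Real.exp (-w ^ 2 / 2) * ∫ t in Set.Iic (c₀ - c₁ * w), Real.exp (-t ^ 2 / 2)) := by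
    intro w
    rw [div_mul_div_comm, h2π]
    ring
  simp_rw [hCDF, stdNormalPDF, hL, MeasureTheory.integral_const_mul]
  rw [← mul_assoc]
  congr 1
  have hπ' : (2 : ℝ) * Real.pi ≠ 0 := by positivity
  field_simp
end

section
/- Let W₁ ~ N(0,1), c₀ ∈ ℝ, c₁ > 0, a ∈ (0,1), and w₀ = (c₀ - Φ^{-1}(a))/c₁. Then E[(Φ(c₀ - c₁ W₁) - a)⁺] = BvN(c₀/√(1+c₁²), w₀; c₁/√(1+c₁²)) - a Φ(w₀). -/
open MeasureTheory ProbabilityTheory Real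
open scoped ENNReal NNReal

namespace CallBvNAux

noncomputable def nPdf (t : ℝ) : ℝ := Real.exp (-t ^ 2 / 2) / Real.sqrt (2 * π)

lemma nPdf_integrable : Integrable nPdf := by
  have h : Integrable (fun t : ℝ => Real.exp (-(1/2) * t ^ 2)) :=
    integrable_exp_neg_mul_sq (by norm_num)
  have := h.div_const (Real.sqrt (2 * π))
  convert this using 2 with t
  unfold nPdf
  ring_nf

lemma nPdf_pos (t : ℝ) : 0 < nPdf t :=
  div_pos (Real.exp_pos _) (Real.sqrt_pos.mpr (by positivity))

lemma nPdf_continuous : Continuous nPdf := by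
  unfold nPdf
  fun_prop

lemma stdNormalCDF_eq (x : ℝ) : stdNormalCDF x = ∫ t in Set.Iic x, nPdf t := rfl

lemma stdNormalCDF_strictMono : StrictMono stdNormalCDF := by
  intro x y hxy
  have hsub : stdNormalCDF x + (∫ t in Set.Ioc x y, nPdf t) = stdNormalCDF y := by
    rw [stdNormalCDF_eq, stdNormalCDF_eq,
      ← setIntegral_union (Set.Iic_disjoint_Ioc le_rfl) measurableSet_Ioc
      nPdf_integrable.integrableOn nPdf_integrable.integrableOn, Set.Iic_union_Ioc_eq_Iic hxy.le]
  have hpos : 0 < ∫ t in Set.Ioc x y, nPdf t := by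
    rw [setIntegral_pos_iff_support_of_nonneg_ae
      (Filter.Eventually.of_forall fun t => (nPdf_pos t).le) nPdf_integrable.integrableOn]
    have hsupp : Function.support nPdf = Set.univ := by
      ext t; simpa [Function.mem_support] using (nPdf_pos t).ne'
    rw [hsupp, Set.univ_inter, Real.volume_Ioc]
    simp [hxy]
  linarith

lemma stdNormalCDF_nonneg (x : ℝ) : 0 ≤ stdNormalCDF x :=
  setIntegral_nonneg measurableSet_Iic fun t _ => (nPdf_pos t).le

lemma stdNormalCDF_le_one (x : ℝ) : stdNormalCDF x ≤ 1 := by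
  have h := integral_gaussianPDFReal_eq_one 0 (v := 1) one_ne_zero
  have h1 : ∫ t : ℝ, nPdf t = 1 := by
    rw [← h]; congr 1 with t; simp [nPdf, gaussianPDFReal, div_eq_inv_mul]
  rw [stdNormalCDF_eq, ← h1]
  exact setIntegral_le_integral nPdf_integrable
    (Filter.Eventually.of_forall fun t => (nPdf_pos t).le)

lemma subst_Iic (g : ℝ → ℝ) (k d : ℝ) {s : ℝ} (hs : 0 < s) :
    ∫ t in Set.Iic k, g ((t + d) / s) = s * ∫ x in Set.Iic ((k + d) / s), g x := by
  rw [← integral_indicator (measurableSet_Iic (a := k)),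
      ← integral_indicator (measurableSet_Iic (a := (k + d) / s))]
  have key : ∀ t : ℝ, (Set.Iic k).indicator (fun t => g ((t + d) / s)) t
      = (Set.Iic ((k + d) / s)).indicator g ((t + d) / s) := by
    intro t
    have hiff : t ∈ Set.Iic k ↔ (t + d) / s ∈ Set.Iic ((k + d) / s) := by
      simp only [Set.mem_Iic]
      constructor
      · intro h; exact (div_le_div_iff_of_pos_right hs).mpr (by linarith)
      · intro h; nlinarith [(div_le_div_iff_of_pos_right hs).mp h]
    by_cases h : t ∈ Set.Iic k
    · rw [Set.indicator_of_mem h, Set.indicator_of_mem (hiff.mp h)]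
    · rw [Set.indicator_of_notMem h, Set.indicator_of_notMem (fun hc => h (hiff.mpr hc))]
  simp_rw [key]
  have h2 := integral_add_right_eq_self (μ := (volume : Measure ℝ))
    (fun u => (Set.Iic ((k + d) / s)).indicator g (u / s)) d
  rw [h2, MeasureTheory.Measure.integral_comp_div
    ((Set.Iic ((k + d) / s)).indicator g) s, abs_of_pos hs, smul_eq_mul]

lemma gauss_integral_eq (f : ℝ → ℝ) :
    ∫ w, f w ∂(gaussianReal 0 1) = ∫ w, nPdf w * f w := by
  rw [gaussianReal_of_var_ne_zero _ one_ne_zero]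
  have hd : gaussianPDF 0 1 = fun x => ((Real.toNNReal (gaussianPDFReal 0 1 x) : ℝ≥0) : ℝ≥0∞) :=
    rfl
  rw [hd, integral_withDensity_eq_integral_smul
    ((measurable_gaussianPDFReal 0 1).real_toNNReal) f]
  congr 1 with w
  rw [NNReal.smul_def, Real.coe_toNNReal _ (gaussianPDFReal_nonneg 0 1 w), smul_eq_mul]
  congr 1
  simp [nPdf, gaussianPDFReal, div_eq_inv_mul]

end CallBvNAux

open CallBvNAux

/-- For `W₁ ~ N(0,1)`, `c₁ > 0`, `a ∈ (0,1)` and `w₀ = (c₀ - Φ⁻¹(a))/c₁`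
(where `q = Φ⁻¹(a)` is characterised by `Φ(q) = a`),
`E[(Φ(c₀ - c₁ W₁) - a)⁺] = BvN(c₀/√(1+c₁²), w₀; c₁/√(1+c₁²)) - a Φ(w₀)`. -/
theorem call_on_loss_BvN (c₀ c₁ a q : ℝ) (hc₁ : 0 < c₁)
    (ha : 0 < a ∧ a < 1) (hq : stdNormalCDF q = a) :
    ∫ w, max (stdNormalCDF (c₀ - c₁ * w) - a) 0 ∂(gaussianReal 0 1) =
      BvN (c₀ / Real.sqrt (1 + c₁ ^ 2)) ((c₀ - q) / c₁) (c₁ / Real.sqrt (1 + c₁ ^ 2)) -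
        a * stdNormalCDF ((c₀ - q) / c₁) := by
  set s : ℝ := Real.sqrt (1 + c₁ ^ 2) with hs_def
  have hs : 0 < s := Real.sqrt_pos.mpr (by positivity)
  have hs2 : s ^ 2 = 1 + c₁ ^ 2 := Real.sq_sqrt (by positivity)
  set w₀ : ℝ := (c₀ - q) / c₁ with hw₀
  have hqw : c₀ - c₁ * w₀ = q := by
    rw [hw₀]; field_simp; ring
  have hΦmeas : Measurable stdNormalCDF := stdNormalCDF_strictMono.monotone.measurable
  have hmeas1 : Measurable fun w : ℝ => stdNormalCDF (c₀ - c₁ * w) :=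
    hΦmeas.comp (measurable_const.sub (measurable_const.mul measurable_id))
  -- Step 1 : expectation as Lebesgue integral against the density
  rw [gauss_integral_eq]
  -- Step 2 : the integrand as an indicator
  have step2 : ∀ w : ℝ, nPdf w * max (stdNormalCDF (c₀ - c₁ * w) - a) 0
      = (Set.Iic w₀).indicator (fun w => nPdf w * (stdNormalCDF (c₀ - c₁ * w) - a)) w := by
    intro w
    by_cases h : w ∈ Set.Iic w₀
    · rw [Set.indicator_of_mem h]
      have h1 : q ≤ c₀ - c₁ * w := by
        have : c₁ * w ≤ c₁ * w₀ := by
          apply mul_le_mul_of_nonneg_left _ hc₁.le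
          exact h
        linarith [hqw]
      have h2 := stdNormalCDF_strictMono.monotone h1
      rw [hq] at h2
      rw [max_eq_left (by linarith)]
    · rw [Set.indicator_of_notMem h]
      have h' : w₀ < w := not_le.mp h
      have h1 : c₀ - c₁ * w < q := by
        have : c₁ * w₀ < c₁ * w := by
          exact mul_lt_mul_of_pos_left h' hc₁
        linarith [hqw]
      have h2 := stdNormalCDF_strictMono h1
      rw [hq] at h2
      rw [max_eq_right (by linarith), mul_zero]
  simp_rw [step2]
  rw [integral_indicator measurableSet_Iic]
  -- integrability facts
  have hint1 : IntegrableOn (fun w => nPdf w * stdNormalCDF (c₀ - c₁ * w)) (Set.Iic w₀) := by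
    apply Integrable.mono nPdf_integrable.integrableOn
    · exact (nPdf_continuous.measurable.mul hmeas1).aestronglyMeasurable
    · filter_upwards with w
      simp only [norm_mul, Real.norm_eq_abs, abs_of_pos (nPdf_pos w),
        abs_of_nonneg (stdNormalCDF_nonneg (c₀ - c₁ * w))]
      nlinarith [stdNormalCDF_le_one (c₀ - c₁ * w), nPdf_pos w]
  have hint2 : IntegrableOn (fun w => a * nPdf w) (Set.Iic w₀) :=
    nPdf_integrable.integrableOn.const_mul a
  -- Step 3 : split
  have hsplit : ∀ w : ℝ, nPdf w * (stdNormalCDF (c₀ - c₁ * w) - a)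
      = nPdf w * stdNormalCDF (c₀ - c₁ * w) - a * nPdf w := fun w => by ring
  simp_rw [hsplit]
  rw [integral_sub hint1 hint2, integral_const_mul]
  have hcdfw0 : ∫ w in Set.Iic w₀, nPdf w = stdNormalCDF w₀ := rfl
  rw [hcdfw0]
  -- BvN side
  have hρ : 1 - (c₁ / s) ^ 2 = 1 / s ^ 2 := by
    field_simp
    linarith
  have hsqrtρ : Real.sqrt (1 - (c₁ / s) ^ 2) = 1 / s := by
    rw [hρ, one_div, Real.sqrt_inv, ← Real.sqrt_sq hs.le, hs2, one_div,
      Real.sqrt_sq hs.le]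
  have h2π : Real.sqrt (2 * π) * Real.sqrt (2 * π) = 2 * π :=
    Real.mul_self_sqrt (by positivity)
  have hconst : 1 / (2 * π * Real.sqrt (1 - (c₁ / s) ^ 2)) = s / (2 * π) := by
    rw [hsqrtρ]
    field_simp
  have inner : ∀ y : ℝ,
      (s / (2 * π)) * ∫ x in Set.Iic (c₀ / s),
        Real.exp (-(x ^ 2 - 2 * (c₁ / s) * x * y + y ^ 2) / (2 * (1 - (c₁ / s) ^ 2)))
      = nPdf y * stdNormalCDF (c₀ - c₁ * y) := by
    intro y
    have hsub := subst_Iic (fun x =>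
      Real.exp (-(x ^ 2 - 2 * (c₁ / s) * x * y + y ^ 2) / (2 * (1 - (c₁ / s) ^ 2))))
      (c₀ - c₁ * y) (c₁ * y) hs
    have hk : (c₀ - c₁ * y + c₁ * y) / s = c₀ / s := by ring_nf
    rw [hk] at hsub
    have hpt : ∫ t in Set.Iic (c₀ - c₁ * y),
        Real.exp (-(((t + c₁ * y) / s) ^ 2 - 2 * (c₁ / s) * ((t + c₁ * y) / s) * y + y ^ 2)
          / (2 * (1 - (c₁ / s) ^ 2)))
        = ∫ t in Set.Iic (c₀ - c₁ * y), Real.exp (-t ^ 2 / 2) * Real.exp (-y ^ 2 / 2) := by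
      apply setIntegral_congr_fun measurableSet_Iic
      intro t _
      simp only
      rw [← Real.exp_add]
      congr 1
      rw [hρ]
      field_simp
      linear_combination (-y ^ 2) * hs2
    rw [hpt] at hsub
    rw [integral_mul_const] at hsub
    -- hsub : s * ∫ x in Iic (c₀/s), ... = (∫ t in Iic (c₀-c₁y), exp (-t^2/2)) * exp (-y^2/2)
    have hΦ : stdNormalCDF (c₀ - c₁ * y)
        = (∫ t in Set.Iic (c₀ - c₁ * y), Real.exp (-t ^ 2 / 2)) / Real.sqrt (2 * π) := by
      rw [stdNormalCDF, integral_div]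
    rw [hΦ]
    unfold nPdf
    have hI : ∫ x in Set.Iic (c₀ / s),
        Real.exp (-(x ^ 2 - 2 * (c₁ / s) * x * y + y ^ 2) / (2 * (1 - (c₁ / s) ^ 2)))
        = ((∫ t in Set.Iic (c₀ - c₁ * y), Real.exp (-t ^ 2 / 2)) * Real.exp (-y ^ 2 / 2)) / s := by
      rw [eq_div_iff hs.ne']
      linarith [hsub]
    rw [hI]
    have hπ : Real.sqrt (2 * π) ≠ 0 := by positivity
    have hA : Real.sqrt 2 ^ 2 * Real.sqrt π ^ 2 = 2 * π := by
      rw [Real.sq_sqrt (by norm_num : (2:ℝ) ≥ 0).le, Real.sq_sqrt Real.pi_pos.le]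
    have hB : Real.sqrt (2 * π) ^ 2 = 2 * π := Real.sq_sqrt (by positivity)
    field_simp
    linear_combination (∫ t in Set.Iic (c₀ - c₁ * y), Real.exp (-(t ^ 2 / 2))) * hB
  have hBvN : BvN (c₀ / s) w₀ (c₁ / s)
      = ∫ y in Set.Iic w₀, nPdf y * stdNormalCDF (c₀ - c₁ * y) := by
    rw [BvN, hconst, ← integral_const_mul]
    exact setIntegral_congr_fun measurableSet_Iic fun y _ => inner y
  rw [hBvN]
end
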